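/- For all integers 1 ≤ p, q ≤ N, A* A = Δ* S(p,q) Δ, where Δ ∈ ℂ^{q×q} is the unitary diagonal matrix with entries Δ_{k,k} = exp(-iπ(k-1)(p-1)/N) for 1 ≤ k ≤ q. In particular, A* A is unitarily similar, via a diagonal unitary, to the real symmetric matrix S(p,q). -/

import Mathlib

open Matrix Complex

/-- The twiddle factor `ω = exp(2πi/N)`. -/
noncomputable def omegaN (N : ℕ) : ℂ := Complex.exp (2 * Real.pi * Complex.I / N)

/-- The `p × q` Fourier submatrix `A` with entries `A_{j,k} = ω^{-(j-1)(k-1)}`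
(indices here are 0-based). -/
noncomputable def fourierA (N p q : ℕ) : Matrix (Fin p) (Fin q) ℂ :=
  fun j k => omegaN N ^ (-(((j : ℕ) * (k : ℕ) : ℕ) : ℤ))

/-- The periodic prolate matrix `S(p,q) ∈ ℝ^{q×q}` with entries
`sin(pπ(j-k)/N)/sin(π(j-k)/N)` off the diagonal and `p` on the diagonal. -/
noncomputable def prolateS (N p q : ℕ) : Matrix (Fin q) (Fin q) ℝ :=
  fun j k => if j = k then (p : ℝ)
    else Real.sin ((p : ℝ) * Real.pi * (((j : ℕ) : ℝ) - ((k : ℕ) : ℝ)) / N) /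
         Real.sin (Real.pi * (((j : ℕ) : ℝ) - ((k : ℕ) : ℝ)) / N)

/-- The unitary diagonal matrix `Δ ∈ ℂ^{q×q}` with entries
`Δ_{k,k} = exp(-iπ(k-1)(p-1)/N)` (0-based: `exp(-iπ k (p-1)/N)`). -/
noncomputable def deltaQ (N p q : ℕ) : Matrix (Fin q) (Fin q) ℂ :=
  Matrix.diagonal fun k =>
    Complex.exp (-(Real.pi : ℂ) * Complex.I * ((k : ℕ) : ℂ) * ((p : ℂ) - 1) / (N : ℂ))

lemma exp_two_mul_I_sub_one (x : ℂ) :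
    Complex.exp (2*x*Complex.I) - 1 = Complex.exp (x*Complex.I) * (2*Complex.I*Complex.sin x) := by
  have h1 : Complex.exp (x*I) * Complex.exp (x*I) = Complex.exp (2*x*I) := by
    rw [← Complex.exp_add]; ring_nf
  have h2 : Complex.exp (x*I) * Complex.exp (-x*I) = 1 := by
    rw [← Complex.exp_add]; ring_nf; exact Complex.exp_zero
  rw [Complex.sin]
  linear_combination -h1 + h2 -
    (Complex.exp (x*I) * Complex.exp (-x*I) - Complex.exp (x*I)^2) * Complex.I_sq

lemma sin_aux_ne_zero (N q : ℕ) (hN : 0 < N) (hqN : q ≤ N) (j k : Fin q) (hjk : j ≠ k) :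
    Real.sin (Real.pi * (((j:ℕ):ℝ) - ((k:ℕ):ℝ)) / N) ≠ 0 := by
  set dR : ℝ := ((j:ℕ):ℝ) - ((k:ℕ):ℝ) with hdR
  have hd0 : dR ≠ 0 := sub_ne_zero.mpr (by exact_mod_cast fun h => hjk (Fin.ext h))
  have hdlt : |dR| < N := by
    rw [abs_sub_lt_iff]
    constructor <;>
    · have h1 : ((j:ℕ):ℝ) < N := by exact_mod_cast lt_of_lt_of_le j.isLt hqN
      have h2 : ((k:ℕ):ℝ) < N := by exact_mod_cast lt_of_lt_of_le k.isLt hqN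
      have h3 : (0:ℝ) ≤ ((j:ℕ):ℝ) := Nat.cast_nonneg _
      have h4 : (0:ℝ) ≤ ((k:ℕ):ℝ) := Nat.cast_nonneg _
      linarith
  intro h
  rw [Real.sin_eq_zero_iff] at h
  obtain ⟨n, hn⟩ := h
  have hNR : (0:ℝ) < N := by exact_mod_cast hN
  have hnd : (n:ℝ) * N = dR := by
    have hπ : Real.pi ≠ 0 := Real.pi_ne_zero
    have := hn
    field_simp at this
    nlinarith [this, Real.pi_pos]
  have hnabs : |(n:ℝ)| * N < N := by
    calc |(n:ℝ)| * N = |(n:ℝ)*N| := by rw [abs_mul, abs_of_pos hNR]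
    _ = |dR| := by rw [hnd]
    _ < N := hdlt
  have h1 : |(n:ℝ)| < 1 := by
    by_contra hc
    push_neg at hc
    nlinarith
  have hn0 : n = 0 := by
    rw [← Int.cast_abs] at h1
    have : |n| < 1 := by exact_mod_cast h1
    exact Int.abs_lt_one_iff.mp this
  rw [hn0] at hnd
  simp at hnd
  exact hd0 hnd.symm

theorem conjTranspose_fourierA_mul_fourierA
    (N p q : ℕ) (hN : 0 < N) (hp1 : 1 ≤ p) (hpN : p ≤ N) (hq1 : 1 ≤ q) (hqN : q ≤ N) :
    (deltaQ N p q)ᴴ * deltaQ N p q = 1 ∧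
    (fourierA N p q)ᴴ * fourierA N p q =
      (deltaQ N p q)ᴴ * (prolateS N p q).map (Complex.ofReal) * deltaQ N p q := by
  have hNC : (N : ℂ) ≠ 0 := Nat.cast_ne_zero.mpr hN.ne'
  have hdel : ∀ k : Fin q,
      (starRingEnd ℂ) (Complex.exp (-(Real.pi : ℂ) * Complex.I * ((k : ℕ) : ℂ) * ((p : ℂ) - 1) / (N : ℂ))) *
        Complex.exp (-(Real.pi : ℂ) * Complex.I * ((k : ℕ) : ℂ) * ((p : ℂ) - 1) / (N : ℂ)) = 1 := by
    intro k
    rw [← Complex.exp_conj, ← Complex.exp_add]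
    rw [show ((starRingEnd ℂ) (-(Real.pi : ℂ) * Complex.I * ((k : ℕ) : ℂ) * ((p : ℂ) - 1) / (N : ℂ)))
        = -(-(Real.pi : ℂ) * Complex.I * ((k : ℕ) : ℂ) * ((p : ℂ) - 1) / (N : ℂ)) by
      simp [map_div₀, Complex.conj_I, map_ofNat]; ring]
    rw [neg_add_cancel, Complex.exp_zero]
  have hstar : ∀ k : Fin q,
      (starRingEnd ℂ) (Complex.exp (-(Real.pi : ℂ) * Complex.I * ((k : ℕ) : ℂ) * ((p : ℂ) - 1) / (N : ℂ)))
        = Complex.exp ((Real.pi : ℂ) * Complex.I * ((k : ℕ) : ℂ) * ((p : ℂ) - 1) / (N : ℂ)) := by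
    intro k
    rw [← Complex.exp_conj]
    congr 1
    simp [map_div₀, Complex.conj_I, map_ofNat]; try ring
  constructor
  · rw [deltaQ, diagonal_conjTranspose, diagonal_mul_diagonal]
    ext i l
    rw [Matrix.diagonal_apply, Matrix.one_apply]
    by_cases h : i = l
    · simp only [h, if_pos rfl, Pi.star_apply]
      exact hdel l
    · simp [h]
  · ext j k
    have hω : omegaN N ≠ 0 := Complex.exp_ne_zero _
    have hconj : ∀ n : ℤ, (starRingEnd ℂ) (omegaN N ^ n) = omegaN N ^ (-n) := by
      intro n
      rw [map_zpow₀, _root_.zpow_neg, ← _root_.inv_zpow]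
      congr 1
      rw [omegaN, ← Complex.exp_conj, ← Complex.exp_neg]
      congr 1
      simp [map_div₀, Complex.conj_I, map_ofNat]; ring
    simp only [deltaQ, Matrix.diagonal_conjTranspose, Matrix.mul_diagonal,
      Matrix.diagonal_mul, Matrix.map_apply, Pi.star_apply]
    simp only [Matrix.mul_apply, Matrix.conjTranspose_apply, fourierA]
    rcases eq_or_ne j k with rfl | hjk
    · -- diagonal entry
      have h1 : ∀ x : Fin p,
          star (omegaN N ^ (-((((x:ℕ) * (j:ℕ) : ℕ)) : ℤ))) *
            omegaN N ^ (-((((x:ℕ) * (j:ℕ) : ℕ)) : ℤ)) = 1 := by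
        intro x
        have h2 : star (omegaN N ^ (-((((x:ℕ) * (j:ℕ) : ℕ)) : ℤ))) =
            omegaN N ^ (((((x:ℕ) * (j:ℕ) : ℕ)) : ℤ)) := by
          rw [show (star (omegaN N ^ (-((((x:ℕ) * (j:ℕ) : ℕ)) : ℤ))) :ℂ) =
            (starRingEnd ℂ) (omegaN N ^ (-((((x:ℕ) * (j:ℕ) : ℕ)) : ℤ))) from rfl, hconj, neg_neg]
        rw [h2, ← zpow_add₀ hω, add_neg_cancel, zpow_zero]
      rw [Finset.sum_congr rfl fun x _ => h1 x]
      simp only [prolateS, if_pos rfl, Finset.sum_const, Finset.card_univ, Fintype.card_fin,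
        nsmul_eq_mul, mul_one]
      have h3 := hdel j
      rw [show (star (Complex.exp (-(Real.pi:ℂ) * Complex.I * ((j:ℕ):ℂ) * ((p:ℂ) - 1) / (N:ℂ))) : ℂ)
        = (starRingEnd ℂ) (Complex.exp (-(Real.pi:ℂ) * Complex.I * ((j:ℕ):ℂ) * ((p:ℂ) - 1) / (N:ℂ))) from rfl]
      push_cast
      linear_combination (-(p:ℂ)) * h3
    · -- off-diagonal entry
      have hsR : Real.sin (Real.pi * (((j:ℕ):ℝ) - ((k:ℕ):ℝ)) / N) ≠ 0 :=
        sin_aux_ne_zero N q hN hqN j k hjk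
      set a : ℂ := ((Real.pi * (((j:ℕ):ℝ) - ((k:ℕ):ℝ)) / N : ℝ) : ℂ) with ha
      have hsa : Complex.sin a ≠ 0 := by
        rw [ha, ← Complex.ofReal_sin]
        exact Complex.ofReal_ne_zero.mpr hsR
      set z : ℂ := Complex.exp (2 * a * Complex.I) with hzdef
      have hz1' : z - 1 = Complex.exp (a * Complex.I) * (2 * Complex.I * Complex.sin a) :=
        exp_two_mul_I_sub_one a
      have hz1 : z ≠ 1 := by
        intro hcontra
        have h0 : z - 1 = 0 := by rw [hcontra]; ring
        rw [hz1'] at h0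
        exact (mul_ne_zero (Complex.exp_ne_zero _)
          (mul_ne_zero (mul_ne_zero two_ne_zero Complex.I_ne_zero) hsa)) h0
      have hzp : z ^ p - 1 =
          Complex.exp ((p:ℂ) * a * Complex.I) * (2 * Complex.I * Complex.sin ((p:ℂ) * a)) := by
        rw [hzdef, ← Complex.exp_nat_mul, show (p:ℂ) * (2 * a * Complex.I) = 2 * ((p:ℂ) * a) * Complex.I by ring]
        exact exp_two_mul_I_sub_one _
      have hterm : ∀ x : Fin p,
          star (omegaN N ^ (-((((x:ℕ) * (j:ℕ) : ℕ)) : ℤ))) *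
            omegaN N ^ (-((((x:ℕ) * (k:ℕ) : ℕ)) : ℤ)) = z ^ (x:ℕ) := by
        intro x
        have h2 : star (omegaN N ^ (-((((x:ℕ) * (j:ℕ) : ℕ)) : ℤ))) =
            omegaN N ^ (((((x:ℕ) * (j:ℕ) : ℕ)) : ℤ)) := by
          rw [show (star (omegaN N ^ (-((((x:ℕ) * (j:ℕ) : ℕ)) : ℤ))) :ℂ) =
            (starRingEnd ℂ) (omegaN N ^ (-((((x:ℕ) * (j:ℕ) : ℕ)) : ℤ))) from rfl, hconj, neg_neg]
        rw [h2, ← zpow_add₀ hω,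
          show ((((x:ℕ) * (j:ℕ) : ℕ)) : ℤ) + (-((((x:ℕ) * (k:ℕ) : ℕ)) : ℤ))
            = (((j:ℕ):ℤ) - ((k:ℕ):ℤ)) * ((x:ℕ):ℤ) by push_cast; ring,
          _root_.zpow_mul, zpow_natCast]
        congr 1
        rw [omegaN, ← Complex.exp_int_mul, hzdef]
        congr 1
        push_cast [ha]
        ring
      rw [Finset.sum_congr rfl fun x _ => hterm x, Fin.sum_univ_eq_sum_range (fun m => z ^ m) p,
        geom_sum_eq hz1 p, hzp, hz1']
      have hkey : Complex.exp ((p:ℂ) * a * Complex.I) * (2 * Complex.I * Complex.sin ((p:ℂ) * a)) /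
          (Complex.exp (a * Complex.I) * (2 * Complex.I * Complex.sin a)) =
          Complex.exp (((p:ℂ) - 1) * a * Complex.I) * (Complex.sin ((p:ℂ) * a) / Complex.sin a) := by
        have hsplit : Complex.exp ((p:ℂ) * a * Complex.I) =
            Complex.exp (((p:ℂ) - 1) * a * Complex.I) * Complex.exp (a * Complex.I) := by
          rw [← Complex.exp_add]; ring_nf
        rw [hsplit]
        field_simp
      rw [hkey]
      -- now handle RHS
      rw [show (star (Complex.exp (-(Real.pi:ℂ) * Complex.I * ((j:ℕ):ℂ) * ((p:ℂ) - 1) / (N:ℂ))) : ℂ)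
        = (starRingEnd ℂ) (Complex.exp (-(Real.pi:ℂ) * Complex.I * ((j:ℕ):ℂ) * ((p:ℂ) - 1) / (N:ℂ))) from rfl,
        hstar j]
      simp only [prolateS, if_neg hjk]
      rw [Complex.ofReal_div, Complex.ofReal_sin, Complex.ofReal_sin]
      have hA1 : ((Real.pi * (((j:ℕ):ℝ) - ((k:ℕ):ℝ)) / N : ℝ) : ℂ) = a := rfl
      have hA2 : (((p:ℝ) * Real.pi * (((j:ℕ):ℝ) - ((k:ℕ):ℝ)) / N : ℝ) : ℂ) = (p:ℂ) * a := by
        rw [ha]; push_cast; ring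
      rw [hA1, hA2]
      have hE : Complex.exp ((Real.pi:ℂ) * Complex.I * ((j:ℕ):ℂ) * ((p:ℂ) - 1) / (N:ℂ)) *
          Complex.exp (-(Real.pi:ℂ) * Complex.I * ((k:ℕ):ℂ) * ((p:ℂ) - 1) / (N:ℂ)) =
          Complex.exp (((p:ℂ) - 1) * a * Complex.I) := by
        rw [← Complex.exp_add]
        congr 1
        rw [ha]; push_cast; field_simp; ring
      linear_combination (-(Complex.sin ((p:ℂ) * a) / Complex.sin a)) * hE
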